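/- Let G be a directed graph on vertex set V = {2-element subsets of [k]}, k ≥ 2, satisfying the triangular substructure property (for every triple {j,j',j''}: either {j,j''} ↔ {j',j''}, or {j,j'} → {j,j''}, or {j,j'} → {j',j''}). Then G has a dominating set of size at most 4·k^{3/2}·√(log k) (for k sufficiently large). -/

import Mathlib

open Finset

attribute [local instance] Classical.propDecidable

namespace Stmt7Main

variable {k : ℕ} (E : Finset (Fin k) → Finset (Fin k) → Prop)

noncomputable def Bset (a c : Fin k) : Finset (Fin k) :=
  univ.filter fun b => b ≠ a ∧ b ≠ c ∧ ¬E {a, b} {a, c} ∧ ¬E {b, c} {a, c}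

noncomputable def Gset (a c : Fin k) : Finset (Fin k) :=
  univ.filter fun b => b ≠ a ∧ b ≠ c ∧ (E {a, b} {a, c} ∨ E {b, c} {a, c})

theorem GBcard {a c : Fin k} (hac : a ≠ c) :
    (Gset E a c).card + (Bset E a c).card = k - 2 := by
  have hdisj : Disjoint (Gset E a c) (Bset E a c) := by
    rw [Finset.disjoint_left]
    intro b hb hb'
    simp only [Gset, Bset, mem_filter, mem_univ, true_and] at hb hb'
    rcases hb.2.2 with h | h
    · exact hb'.2.2.1 h
    · exact hb'.2.2.2 h
  have hunion : Gset E a c ∪ Bset E a c = univ \ {a, c} := by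
    ext b
    simp only [Gset, Bset, mem_union, mem_filter, mem_univ, true_and, mem_sdiff,
      mem_insert, mem_singleton]
    by_cases hE1 : E {a, b} {a, c} ∨ E {b, c} {a, c} <;> tauto
  have hcard : (univ \ ({a, c} : Finset (Fin k))).card = k - 2 := by
    rw [Finset.card_sdiff_of_subset (Finset.subset_univ _), Finset.card_univ, Fintype.card_fin,
      Finset.card_pair hac]
  rw [← Finset.card_union_of_disjoint hdisj, hunion, hcard]

theorem K1 (hE : ∀ a b c : Fin k, a ≠ b → a ≠ c → b ≠ c →
      (E {a, c} {b, c} ∧ E {b, c} {a, c}) ∨ E {a, b} {a, c} ∨ E {a, b} {b, c})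
    {a b c : Fin k} (hac : a ≠ c) (hb : b ∈ Bset E a c) :
    E {a, b} {b, c} ∧ E {b, c} {a, b} := by
  simp only [Bset, mem_filter, mem_univ, true_and] at hb
  obtain ⟨hba, hbc, h1, h2⟩ := hb
  constructor
  · rcases hE a b c (Ne.symm hba) hac hbc with ⟨_, h⟩ | h | h
    · exact absurd h h2
    · exact absurd h h1
    · exact h
  · rcases hE c b a (Ne.symm hbc) (Ne.symm hac) hba with ⟨_, h⟩ | h | h
    · rw [pair_comm b a, pair_comm c a] at h
      exact absurd h h1
    · rw [pair_comm c b, pair_comm c a] at h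
      exact absurd h h2
    · rw [pair_comm c b, pair_comm b a] at h
      exact h

theorem K2 (hE : ∀ a b c : Fin k, a ≠ b → a ≠ c → b ≠ c →
      (E {a, c} {b, c} ∧ E {b, c} {a, c}) ∨ E {a, b} {a, c} ∨ E {a, b} {b, c})
    {a b c : Fin k} (hac : a ≠ c) (hb : b ∈ Bset E a c) :
    c ∉ Bset E a b := by
  intro hc
  have h := (K1 E hE hac hb).2
  simp only [Bset, mem_filter, mem_univ, true_and] at hc
  rw [pair_comm b c] at h
  exact hc.2.2.2 h


theorem card_filter_product {α β : Type*} (s : Finset α) (t : Finset β) (P : α → β → Prop)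
    [∀ a b, Decidable (P a b)] :
    ((s ×ˢ t).filter fun p => P p.1 p.2).card = ∑ a ∈ s, (t.filter (P a)).card := by
  rw [Finset.card_filter, Finset.sum_product]
  refine Finset.sum_congr rfl fun a _ => ?_
  rw [Finset.card_filter]


theorem Qcard (K2 : ∀ {a b c : Fin k}, a ≠ c → b ∈ Bset E a c → c ∉ Bset E a b)
    (t : ℕ) (a : Fin k) :
    (univ.filter fun c => c ≠ a ∧ k ≤ (Bset E a c).card + t + 2).card ≤ 2 * t + 1 := by
  set Q : Finset (Fin k) := univ.filter fun c => c ≠ a ∧ k ≤ (Bset E a c).card + t + 2 with hQdef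
  rcases Q.eq_empty_or_nonempty with hQ | hQ
  · rw [hQ]; simp
  -- basic : card of univ.filter (· ≠ a) is k - 1
  have hk1 : (univ.filter fun b : Fin k => b ≠ a).card = k - 1 := by
    rw [Finset.filter_ne' univ a, Finset.card_erase_of_mem (mem_univ a), Finset.card_univ,
      Fintype.card_fin]
  -- key pointwise bound
  have key : ∀ c ∈ Q, Q.card ≤ (Bset E a c ∩ Q).card + (t + 1) := by
    intro c hc
    rw [hQdef, mem_filter] at hc
    obtain ⟨_, hca, hBc⟩ := hc
    have hsub : (Bset E a c \ Q) ∪ Q ⊆ univ.filter fun b : Fin k => b ≠ a := by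
      intro x hx
      rw [mem_union] at hx
      rw [mem_filter]
      refine ⟨mem_univ x, ?_⟩
      rcases hx with hx | hx
      · have := (mem_sdiff.mp hx).1
        simp only [Bset, mem_filter] at this
        exact this.2.1
      · rw [hQdef, mem_filter] at hx
        exact hx.2.1
    have hcard1 : (Bset E a c \ Q).card + Q.card ≤ k - 1 := by
      rw [← Finset.card_union_of_disjoint (Finset.sdiff_disjoint)]
      calc ((Bset E a c \ Q) ∪ Q).card ≤ (univ.filter fun b : Fin k => b ≠ a).card :=
            Finset.card_le_card hsub
        _ = k - 1 := hk1
    have hcard2 : (Bset E a c ∩ Q).card + (Bset E a c \ Q).card = (Bset E a c).card :=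
      Finset.card_inter_add_card_sdiff _ _
    have hkk : 1 ≤ k := Nat.one_le_iff_ne_zero.mpr (by
      rintro rfl; exact absurd a.2 (by omega))
    omega
  -- sum it
  have hsum : Q.card * Q.card ≤ (∑ c ∈ Q, (Bset E a c ∩ Q).card) + Q.card * (t + 1) := by
    have := Finset.sum_le_sum key
    rw [Finset.sum_const, Finset.sum_add_distrib, Finset.sum_const] at this
    simpa [smul_eq_mul, mul_comm] using this
  -- double counting of the antisymmetric relation
  have hP : (∑ c ∈ Q, (Bset E a c ∩ Q).card) ≤ Q.card.choose 2 := by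
    have heq : (∑ c ∈ Q, (Bset E a c ∩ Q).card)
        = ((Q ×ˢ Q).filter fun p => p.2 ∈ Bset E a p.1).card := by
      have h1 := card_filter_product Q Q fun c b => b ∈ Bset E a c
      refine Eq.trans ?_ h1.symm
      refine Finset.sum_congr rfl fun c _ => ?_
      congr 1
      ext x
      simp [and_comm]
    rw [heq, ← Finset.card_powersetCard 2 Q]
    refine Finset.card_le_card_of_injOn (fun p => {p.1, p.2}) ?_ ?_
    · intro p hp
      rw [Finset.mem_coe, mem_filter, mem_product] at hp
      obtain ⟨⟨hp1, hp2⟩, hpB⟩ := hp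
      have hne : p.2 ≠ p.1 := by
        simp only [Bset, mem_filter, mem_univ, true_and] at hpB
        exact hpB.2.1
      rw [Finset.mem_coe, mem_powersetCard]
      constructor
      · intro x hx
        rcases Finset.mem_insert.mp hx with h | h
        · exact h ▸ hp1
        · exact (Finset.mem_singleton.mp h) ▸ hp2
      · rw [Finset.card_insert_of_notMem (by simp [hne.symm]), Finset.card_singleton]
    · intro p hp q hq hfe
      rw [Finset.coe_filter, Set.mem_setOf_eq] at hp hq
      obtain ⟨hpQ, hpB⟩ := hp
      obtain ⟨hqQ, hqB⟩ := hq
      rw [Finset.mem_product] at hpQ hqQ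
      have hap : a ≠ p.1 := by
        have := hpQ.1; rw [hQdef, mem_filter] at this; exact (this.2.1).symm
      have haq : a ≠ q.1 := by
        have := hqQ.1; rw [hQdef, mem_filter] at this; exact (this.2.1).symm
      have hne : p.2 ≠ p.1 := by
        simp only [Bset, mem_filter, mem_univ, true_and] at hpB
        exact hpB.2.1
      have hfe' : ({p.1, p.2} : Finset (Fin k)) = {q.1, q.2} := hfe
      have hp1m : p.1 ∈ ({q.1, q.2} : Finset (Fin k)) := by
        rw [← hfe']; exact Finset.mem_insert_self _ _
      have hp2m : p.2 ∈ ({q.1, q.2} : Finset (Fin k)) := by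
        rw [← hfe']; exact Finset.mem_insert.mpr (Or.inr (Finset.mem_singleton_self _))
      rcases Finset.mem_insert.mp hp1m with h11 | h12
      · -- p.1 = q.1, then p.2 = q.2
        rcases Finset.mem_insert.mp hp2m with h21 | h22
        · exact absurd (h21.trans h11.symm) hne
        · exact Prod.ext h11 (Finset.mem_singleton.mp h22)
      · -- p.1 = q.2 : contradiction with antisymmetry
        rw [Finset.mem_singleton] at h12
        rcases Finset.mem_insert.mp hp2m with h21 | h22
        · -- p.2 = q.1
          exfalso
          have hanti := K2 hap hpB
          exact hanti (by rw [h12, h21]; exact hqB)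
        · rw [Finset.mem_singleton] at h22
          exact absurd (h22.trans h12.symm) hne
  -- final arithmetic
  have hch : Q.card.choose 2 = Q.card * (Q.card - 1) / 2 := Nat.choose_two_right _
  have hdiv : Q.card * (Q.card - 1) / 2 * 2 ≤ Q.card * (Q.card - 1) := Nat.div_mul_le_self _ _
  obtain ⟨m, hm⟩ : ∃ m, Q.card = m + 1 := ⟨Q.card - 1, by
    have := Finset.card_pos.mpr hQ; omega⟩
  have hmain : Q.card * (2 * Q.card) ≤ Q.card * (m + 2 * t + 2) := by
    have c1 : Q.card * Q.card ≤ Q.card * (Q.card - 1) / 2 + Q.card * (t + 1) := by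
      calc Q.card * Q.card ≤ (∑ c ∈ Q, (Bset E a c ∩ Q).card) + Q.card * (t + 1) := hsum
        _ ≤ Q.card.choose 2 + Q.card * (t + 1) := by omega
        _ = Q.card * (Q.card - 1) / 2 + Q.card * (t + 1) := by rw [hch]
    have c2 : 2 * (Q.card * Q.card) ≤ Q.card * (Q.card - 1) + 2 * (Q.card * (t + 1)) := by
      omega
    calc Q.card * (2 * Q.card) = 2 * (Q.card * Q.card) := by ring
      _ ≤ Q.card * (Q.card - 1) + 2 * (Q.card * (t + 1)) := c2
      _ = Q.card * m + 2 * (Q.card * (t + 1)) := by rw [hm]; simp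
      _ = Q.card * (m + 2 * t + 2) := by ring
  have := Nat.le_of_mul_le_mul_left hmain (by omega : 0 < Q.card)
  omega



end Stmt7Main

namespace Stmt7Glob
open Stmt7Main

theorem hit {k : ℕ} (hk : 0 < k) (t : ℕ) :
    ∀ (s : ℕ) (F : Finset (Finset (Fin k))), (∀ G ∈ F, t ≤ G.card) →
      ∃ S : Finset (Fin k), S.card ≤ s ∧
        (F.filter fun G => ∀ x ∈ S, x ∉ G).card * k ^ s ≤ F.card * (k - t) ^ s := by
  intro s
  induction s with
  | zero =>
    intro F hF
    refine ⟨∅, le_refl _, ?_⟩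
    simp only [pow_zero, mul_one]
    exact Finset.card_le_card (Finset.filter_subset _ _)
  | succ s ih =>
    intro F hF
    rcases F.eq_empty_or_nonempty with rfl | hFne
    · exact ⟨∅, Nat.zero_le _, by simp⟩
    -- choose a good element x
    have hsum : ∑ x : Fin k, (t * F.card) ≤ ∑ x : Fin k, k * (F.filter fun G => x ∈ G).card := by
      have h1 : ∑ x : Fin k, (F.filter fun G => x ∈ G).card = ∑ G ∈ F, G.card := by
        simp only [Finset.card_filter]
        rw [Finset.sum_comm]
        refine Finset.sum_congr rfl fun G _ => ?_
        simp [Finset.card_filter]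
      rw [Finset.sum_const, ← Finset.mul_sum, h1]
      have h2 : t * F.card ≤ ∑ G ∈ F, G.card := by
        calc t * F.card = ∑ _G ∈ F, t := by rw [Finset.sum_const, smul_eq_mul, mul_comm]
          _ ≤ ∑ G ∈ F, G.card := Finset.sum_le_sum hF
      calc (Finset.univ : Finset (Fin k)).card • (t * F.card)
          = k * (t * F.card) := by simp [Finset.card_univ, smul_eq_mul]
        _ ≤ k * ∑ G ∈ F, G.card := Nat.mul_le_mul_left _ h2
    obtain ⟨x, -, hx⟩ := Finset.exists_le_of_sum_le (Finset.univ_nonempty_iff.mpr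
      ⟨⟨0, hk⟩⟩ ) hsum
    set F' := F.filter (fun G => x ∉ G) with hF'def
    have hstep : k * F'.card ≤ (k - t) * F.card := by
      have hsplit : (F.filter fun G => x ∈ G).card + F'.card = F.card := by
        rw [hF'def]
        exact Finset.card_filter_add_card_filter_not _
      have : k * F'.card + t * F.card ≤ k * F'.card + k * (F.filter fun G => x ∈ G).card :=
        Nat.add_le_add_left hx _
      have h3 : k * F'.card + k * (F.filter fun G => x ∈ G).card = k * F.card := by
        rw [← Nat.mul_add, Nat.add_comm, hsplit]
      rw [Nat.sub_mul]
      omega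
    obtain ⟨S', hS'card, hS'⟩ := ih F' (fun G hG => hF G (Finset.mem_of_mem_filter G hG))
    refine ⟨insert x S', ?_, ?_⟩
    · calc (insert x S').card ≤ S'.card + 1 := Finset.card_insert_le _ _
        _ ≤ s + 1 := by omega
    · have hsub : (F.filter fun G => ∀ y ∈ insert x S', y ∉ G) ⊆
          (F'.filter fun G => ∀ y ∈ S', y ∉ G) := by
        intro G hG
        rw [Finset.mem_filter] at hG
        obtain ⟨hGF, hGmiss⟩ := hG
        rw [Finset.mem_filter, hF'def, Finset.mem_filter]
        exact ⟨⟨hGF, hGmiss x (Finset.mem_insert_self _ _)⟩,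
          fun y hy => hGmiss y (Finset.mem_insert_of_mem hy)⟩
      calc (F.filter fun G => ∀ y ∈ insert x S', y ∉ G).card * k ^ (s + 1)
          = ((F.filter fun G => ∀ y ∈ insert x S', y ∉ G).card * k ^ s) * k := by ring
        _ ≤ ((F'.filter fun G => ∀ y ∈ S', y ∉ G).card * k ^ s) * k :=
            Nat.mul_le_mul_right _ (Nat.mul_le_mul_right _ (Finset.card_le_card hsub))
        _ ≤ (F'.card * (k - t) ^ s) * k := Nat.mul_le_mul_right _ hS'
        _ = (k * F'.card) * (k - t) ^ s := by ring
        _ ≤ ((k - t) * F.card) * (k - t) ^ s := Nat.mul_le_mul_right _ hstep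
        _ = F.card * (k - t) ^ (s + 1) := by ring

theorem analytic1 {k t s : ℕ} (hk : 2 ≤ k) (htk : t ≤ k)
    (hts : 2 * (k : ℝ) * Real.log k < (t : ℝ) * s) :
    k ^ 2 * (k - t) ^ s < k ^ s := by
  have hk0 : (0 : ℝ) < k := by positivity
  have hlog : 0 < Real.log k := Real.log_pos (by exact_mod_cast hk)
  -- real version
  have hreal : (k : ℝ) ^ 2 * ((k : ℝ) - t) ^ s < (k : ℝ) ^ s := by
    have h1 : (k : ℝ) - t ≤ k * Real.exp (-(t / k)) := by
      have := Real.add_one_le_exp (-((t : ℝ) / k))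
      have h2 : (k : ℝ) * (-((t : ℝ) / k) + 1) ≤ k * Real.exp (-(t / k)) :=
        mul_le_mul_of_nonneg_left this (le_of_lt hk0)
      calc (k : ℝ) - t = k * (-((t : ℝ) / k) + 1) := by field_simp; ring
        _ ≤ _ := h2
    have h0 : (0 : ℝ) ≤ (k : ℝ) - t := by
      have : (t : ℝ) ≤ k := by exact_mod_cast htk
      linarith
    have h2 : ((k : ℝ) - t) ^ s ≤ (k : ℝ) ^ s * Real.exp (-(t / k)) ^ s := by
      calc ((k : ℝ) - t) ^ s ≤ (k * Real.exp (-(t / k))) ^ s := pow_le_pow_left₀ h0 h1 s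
        _ = (k : ℝ) ^ s * Real.exp (-(t / k)) ^ s := mul_pow _ _ _
    have h3 : Real.exp (-((t : ℝ) / k)) ^ s = Real.exp ((s : ℝ) * (-((t : ℝ) / k))) :=
      (Real.exp_nat_mul _ s).symm
    have h4 : Real.exp ((s : ℝ) * (-((t : ℝ) / k))) < Real.exp (-(2 * Real.log k)) := by
      apply Real.exp_lt_exp.mpr
      have heq : (s : ℝ) * (-((t : ℝ) / k)) = -((t : ℝ) * s / k) := by ring
      rw [heq]
      apply neg_lt_neg
      rw [lt_div_iff₀ hk0]
      nlinarith
    have h5 : Real.exp (-(2 * Real.log k)) = ((k : ℝ) * k)⁻¹ := by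
      rw [Real.exp_neg]
      congr 1
      rw [show (2 : ℝ) * Real.log k = Real.log k + Real.log k by ring, Real.exp_add,
        Real.exp_log hk0]
    have hpow : (0 : ℝ) < (k : ℝ) ^ s := by positivity
    calc (k : ℝ) ^ 2 * ((k : ℝ) - t) ^ s
        ≤ (k : ℝ) ^ 2 * ((k : ℝ) ^ s * Real.exp (-(t / k)) ^ s) := by
          apply mul_le_mul_of_nonneg_left h2 (by positivity)
      _ < (k : ℝ) ^ 2 * ((k : ℝ) ^ s * ((k : ℝ) * k)⁻¹) := by
          apply mul_lt_mul_of_pos_left _ (by positivity)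
          apply mul_lt_mul_of_pos_left _ hpow
          rw [h3, ← h5]
          exact h4
      _ = (k : ℝ) ^ s := by field_simp
  have hcast : ((k ^ 2 * (k - t) ^ s : ℕ) : ℝ) = (k : ℝ) ^ 2 * ((k : ℝ) - t) ^ s := by
    push_cast [Nat.cast_sub htk]
    ring
  have := hreal
  rw [← hcast] at this
  exact_mod_cast this

theorem sizebound {k t : ℕ} (hk : 2 ^ 20 ≤ k)
    (ht : (t : ℝ) ≤ Real.sqrt ((k : ℝ) * Real.log k) + 1) :
    (((4 * t + 2) * k : ℕ) : ℝ) ≤ 4 * (k : ℝ) ^ ((3 : ℝ) / 2) * Real.sqrt (Real.logb 2 k) := by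
  have hk0 : (0 : ℝ) < k := by positivity
  have hk2 : (2 : ℝ) ≤ k := by
    have : (2:ℕ) ≤ k := le_trans (by norm_num) hk
    exact_mod_cast this
  have hlog : (0:ℝ) < Real.log k := Real.log_pos (by linarith)
  set A := Real.sqrt k with hA
  set Bq := Real.sqrt (Real.log k) with hB
  set c := Real.sqrt (Real.log 2) with hc
  have hc0 : 0 < c := Real.sqrt_pos.mpr (Real.log_pos (by norm_num))
  have hc84 : c ≤ 0.84 := by
    rw [hc, show (0.84 : ℝ) = Real.sqrt (0.84 ^ 2) from (Real.sqrt_sq (by norm_num)).symm]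
    apply Real.sqrt_le_sqrt
    nlinarith [Real.log_two_lt_d9]
  have hA1024 : (1024 : ℝ) ≤ A := by
    rw [hA, show (1024 : ℝ) = Real.sqrt (1024 ^ 2) from (Real.sqrt_sq (by norm_num)).symm]
    apply Real.sqrt_le_sqrt
    have : ((2 : ℝ) ^ 20) ≤ k := by exact_mod_cast hk
    nlinarith
  have hB3 : (3 : ℝ) ≤ Bq := by
    rw [hB, show (3 : ℝ) = Real.sqrt (3 ^ 2) from (Real.sqrt_sq (by norm_num)).symm]
    apply Real.sqrt_le_sqrt
    have hk20 : ((2 : ℝ) ^ 20) ≤ k := by exact_mod_cast hk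
    have h20 : (20 : ℝ) * Real.log 2 ≤ Real.log k := by
      rw [show ((20 : ℝ)) = ((20 : ℕ) : ℝ) by norm_num, ← Real.log_pow]
      exact Real.log_le_log (by positivity) (by exact_mod_cast hk20)
    nlinarith [Real.log_two_gt_d9]
  have hAA : A * A = (k : ℝ) := Real.mul_self_sqrt (le_of_lt hk0)
  have hrpow : (k : ℝ) ^ ((3 : ℝ) / 2) = (k : ℝ) * A := by
    rw [show (3 : ℝ)/2 = 1 + 1/2 by norm_num, Real.rpow_add hk0, Real.rpow_one,
      hA, Real.sqrt_eq_rpow]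
  have hlogb : Real.sqrt (Real.logb 2 k) = Bq / c := by
    rw [Real.logb, hB, hc, Real.sqrt_div (le_of_lt hlog)]
  rw [hrpow, hlogb]
  have key : 4 * A * Bq + 6 ≤ 4 * A * (Bq / c) := by
    have hre : 4 * A * (Bq / c) = (4 * A * Bq) / c := by ring
    rw [hre, le_div_iff₀ hc0]
    have hAB : (3072 : ℝ) ≤ A * Bq := by nlinarith
    nlinarith
  have htt : ((4 * t + 2) * k : ℕ) = ((4 * (t:ℝ) + 2) * k) := by push_cast; ring
  rw [htt]
  have h1 : 4 * (t : ℝ) + 2 ≤ 4 * A * Bq + 6 := by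
    have hsq : Real.sqrt ((k : ℝ) * Real.log k) = A * Bq := by
      rw [hA, hB, Real.sqrt_mul (le_of_lt hk0)]
    nlinarith [ht, hsq]
  calc (4 * (t : ℝ) + 2) * k ≤ (4 * A * (Bq / c)) * k := by
        apply mul_le_mul_of_nonneg_right _ (le_of_lt hk0)
        linarith
    _ = 4 * ((k:ℝ) * A) * (Bq / c) := by ring


end Stmt7Glob


/-- For all sufficiently large `k`, any digraph on the 2-element subsets of `[k]`
with the triangular substructure property has a dominating set of size at most
`4 k^{3/2} √(log₂ k)`. -/
theorem stmt_7 :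
    ∃ k0 : ℕ, ∀ k : ℕ, k0 ≤ k →
      ∀ E : Finset (Fin k) → Finset (Fin k) → Prop,
        (∀ a b c : Fin k, a ≠ b → a ≠ c → b ≠ c →
          (E {a, c} {b, c} ∧ E {b, c} {a, c}) ∨ E {a, b} {a, c} ∨ E {a, b} {b, c}) →
        ∃ D : Finset (Finset (Fin k)),
          D ⊆ Finset.univ.filter (fun s : Finset (Fin k) => s.card = 2) ∧
          (∀ v : Finset (Fin k), v.card = 2 → v ∈ D ∨ ∃ u ∈ D, E u v) ∧
          (D.card : ℝ) ≤ 4 * (k : ℝ) ^ ((3 : ℝ) / 2) * Real.sqrt (Real.logb 2 k) := by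
  refine ⟨2 ^ 20, ?_⟩
  intro k hk E hE
  have hk2 : 2 ≤ k := le_trans (by norm_num) hk
  have hk0 : 0 < k := by omega
  have hkR2 : (2 : ℝ) ≤ (k : ℝ) := by exact_mod_cast hk2
  have hlogpos : 0 < Real.log k := Real.log_pos (by linarith)
  set t : ℕ := ⌈Real.sqrt ((k : ℝ) * Real.log k)⌉₊ with htdef
  set s : ℕ := 2 * t + 1 with hsdef
  have hsqnn : (0 : ℝ) ≤ (k : ℝ) * Real.log k := by positivity
  have ht_lb : Real.sqrt ((k : ℝ) * Real.log k) ≤ (t : ℝ) := Nat.le_ceil _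
  have ht_ub : (t : ℝ) ≤ Real.sqrt ((k : ℝ) * Real.log k) + 1 :=
    le_of_lt (Nat.ceil_lt_add_one (Real.sqrt_nonneg _))
  have ht1 : 1 ≤ t := Nat.ceil_pos.mpr (Real.sqrt_pos.mpr (by positivity))
  have htk : t ≤ k := by
    rw [htdef, Nat.ceil_le]
    have h1 : Real.log k ≤ (k : ℝ) :=
      le_trans (Real.log_le_sub_one_of_pos (by positivity)) (by linarith)
    calc Real.sqrt ((k : ℝ) * Real.log k) ≤ Real.sqrt ((k : ℝ) * (k : ℝ)) :=
        Real.sqrt_le_sqrt (by nlinarith)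
      _ = (k : ℝ) := Real.sqrt_mul_self (by positivity)
  have hts : 2 * (k : ℝ) * Real.log k < (t : ℝ) * (s : ℕ) := by
    have hsq : Real.sqrt ((k : ℝ) * Real.log k) ^ 2 = (k : ℝ) * Real.log k :=
      Real.sq_sqrt hsqnn
    have h2 : (k : ℝ) * Real.log k ≤ (t : ℝ) ^ 2 := by
      nlinarith [ht_lb, Real.sqrt_nonneg ((k : ℝ) * Real.log k)]
    have h3 : (t : ℝ) * (s : ℕ) = 2 * (t : ℝ) ^ 2 + t := by rw [hsdef]; push_cast; ring
    have ht1R : (1 : ℝ) ≤ (t : ℝ) := by exact_mod_cast ht1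
    rw [h3]
    nlinarith
  have K2' : ∀ {a b c : Fin k}, a ≠ c → b ∈ Stmt7Main.Bset E a c →
      c ∉ Stmt7Main.Bset E a b := fun hac hb => Stmt7Main.K2 E hE hac hb
  set F : Finset (Finset (Fin k)) :=
    ((univ ×ˢ univ : Finset (Fin k × Fin k)).filter fun p =>
      p.2 ≠ p.1 ∧ ¬(k ≤ (Stmt7Main.Bset E p.1 p.2).card + t + 2)).image
      (fun p => Stmt7Main.Gset E p.1 p.2) with hFdef
  have hFbound : ∀ G ∈ F, t ≤ G.card := by
    intro G hG
    rw [hFdef, Finset.mem_image] at hG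
    obtain ⟨p, hp, rfl⟩ := hG
    rw [Finset.mem_filter] at hp
    obtain ⟨-, hne, hlow⟩ := hp
    have hGB := Stmt7Main.GBcard E (Ne.symm hne)
    omega
  have hFcard : F.card ≤ k ^ 2 := by
    calc F.card ≤ _ := Finset.card_image_le
      _ ≤ (univ ×ˢ univ : Finset (Fin k × Fin k)).card := Finset.card_filter_le _ _
      _ = k ^ 2 := by
          rw [Finset.card_product, Finset.card_univ, Fintype.card_fin]; ring
  obtain ⟨S, hScard, hSineq⟩ := Stmt7Glob.hit hk0 t s F hFbound
  have hzero : (F.filter fun G => ∀ x ∈ S, x ∉ G).card = 0 := by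
    have h1 : (F.filter fun G => ∀ x ∈ S, x ∉ G).card * k ^ s ≤ k ^ 2 * (k - t) ^ s :=
      le_trans hSineq (Nat.mul_le_mul_right _ hFcard)
    have h2 : k ^ 2 * (k - t) ^ s < k ^ s := Stmt7Glob.analytic1 hk2 htk hts
    have h4 : (F.filter fun G => ∀ x ∈ S, x ∉ G).card * k ^ s < 1 * k ^ s := by
      rw [one_mul]; omega
    have h5 := Nat.lt_of_mul_lt_mul_right h4
    omega
  have hhit : ∀ a c : Fin k, a ≠ c → ¬(k ≤ (Stmt7Main.Bset E a c).card + t + 2) →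
      ∃ y ∈ S, y ∈ Stmt7Main.Gset E a c := by
    intro a c hac hlow
    by_contra hno
    push_neg at hno
    have hmem : Stmt7Main.Gset E a c ∈ F.filter fun G => ∀ x ∈ S, x ∉ G := by
      rw [Finset.mem_filter]
      constructor
      · rw [hFdef, Finset.mem_image]
        refine ⟨(a, c), ?_, rfl⟩
        rw [Finset.mem_filter]
        exact ⟨Finset.mem_product.mpr ⟨mem_univ _, mem_univ _⟩, hac.symm, hlow⟩
      · exact hno
    have := Finset.card_pos.mpr ⟨_, hmem⟩
    omega
  set Dpairs : Finset (Finset (Fin k)) :=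
    ((S ×ˢ (univ : Finset (Fin k))).filter fun p => p.1 ≠ p.2).image
      (fun p => ({p.1, p.2} : Finset (Fin k))) with hDp
  set Dbig : Finset (Finset (Fin k)) :=
    ((univ ×ˢ univ : Finset (Fin k × Fin k)).filter fun p =>
      p.2 ≠ p.1 ∧ k ≤ (Stmt7Main.Bset E p.1 p.2).card + t + 2).image
      (fun p => ({p.1, p.2} : Finset (Fin k))) with hDb
  refine ⟨Dpairs ∪ Dbig, ?_, ?_, ?_⟩
  · intro v hv
    rw [Finset.mem_filter]
    refine ⟨mem_univ _, ?_⟩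
    rcases Finset.mem_union.mp hv with h | h
    · rw [hDp, Finset.mem_image] at h
      obtain ⟨p, hp, rfl⟩ := h
      exact Finset.card_pair (Finset.mem_filter.mp hp).2
    · rw [hDb, Finset.mem_image] at h
      obtain ⟨p, hp, rfl⟩ := h
      exact Finset.card_pair ((Finset.mem_filter.mp hp).2.1.symm)
  · intro v hv
    obtain ⟨a, c, hac, rfl⟩ := Finset.card_eq_two.mp hv
    by_cases hbig : k ≤ (Stmt7Main.Bset E a c).card + t + 2
    · left
      apply Finset.mem_union_right
      rw [hDb, Finset.mem_image]
      refine ⟨(a, c), ?_, rfl⟩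
      rw [Finset.mem_filter]
      exact ⟨Finset.mem_product.mpr ⟨mem_univ _, mem_univ _⟩, hac.symm, hbig⟩
    · right
      obtain ⟨y, hyS, hyG⟩ := hhit a c hac hbig
      simp only [Stmt7Main.Gset, Finset.mem_filter, Finset.mem_univ, true_and] at hyG
      obtain ⟨hya, hyc, hE12⟩ := hyG
      rcases hE12 with h | h
      · refine ⟨{y, a}, Finset.mem_union_left _ ?_, ?_⟩
        · rw [hDp, Finset.mem_image]
          refine ⟨(y, a), ?_, rfl⟩
          rw [Finset.mem_filter]
          exact ⟨Finset.mem_product.mpr ⟨hyS, mem_univ _⟩, hya⟩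
        · rw [Finset.pair_comm y a]; exact h
      · refine ⟨{y, c}, Finset.mem_union_left _ ?_, ?_⟩
        · rw [hDp, Finset.mem_image]
          refine ⟨(y, c), ?_, rfl⟩
          rw [Finset.mem_filter]
          exact ⟨Finset.mem_product.mpr ⟨hyS, mem_univ _⟩, hyc⟩
        · exact h
  · have hDpc : Dpairs.card ≤ s * k := by
      calc Dpairs.card ≤ _ := Finset.card_image_le
        _ ≤ (S ×ˢ (univ : Finset (Fin k))).card := Finset.card_filter_le _ _
        _ = S.card * k := by rw [Finset.card_product, Finset.card_univ, Fintype.card_fin]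
        _ ≤ s * k := Nat.mul_le_mul_right _ hScard
    have hDbc : Dbig.card ≤ k * (2 * t + 1) := by
      have hcfp := Stmt7Main.card_filter_product (univ : Finset (Fin k))
        (univ : Finset (Fin k))
        (fun a c => c ≠ a ∧ k ≤ (Stmt7Main.Bset E a c).card + t + 2)
      calc Dbig.card ≤ _ := Finset.card_image_le
        _ = ∑ a : Fin k, ((univ : Finset (Fin k)).filter fun c =>
              c ≠ a ∧ k ≤ (Stmt7Main.Bset E a c).card + t + 2).card := hcfp
        _ ≤ ∑ _a : Fin k, (2 * t + 1) :=
            Finset.sum_le_sum (fun a _ => Stmt7Main.Qcard E (fun {a b c} => K2') t a)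
        _ = k * (2 * t + 1) := by
            rw [Finset.sum_const, Finset.card_univ, Fintype.card_fin, smul_eq_mul]
    have htot : (Dpairs ∪ Dbig).card ≤ (4 * t + 2) * k := by
      have hun := Finset.card_union_le Dpairs Dbig
      have hcomb : s * k + k * (2 * t + 1) = (4 * t + 2) * k := by rw [hsdef]; ring
      omega
    calc ((Dpairs ∪ Dbig).card : ℝ) ≤ (((4 * t + 2) * k : ℕ) : ℝ) := by exact_mod_cast htot
      _ ≤ _ := Stmt7Glob.sizebound hk ht_ub
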